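/- Let g : 𝕋² → 𝕋² be a minimal homeomorphism of the two-torus 𝕋² = (ℝ/ℤ)² (every forward orbit {gⁿ(x) : n ∈ ℕ} is dense), let μ_{−1}, μ_{+1} be ergodic g-invariant Borel probability measures on 𝕋² that are absolutely continuous with respect to Haar measure, and let φ : 𝕋² → ℝ be a continuous function with ∫ φ dμ_{−1} < 0 < ∫ φ dμ_{+1}. Then there exists a constant c ∈ (0,1) such that the map H_c : 𝕋² × 𝕋 → 𝕋² × 𝕋 defined by H_c(x,t) = (g(x), φ(x) + c + t (mod 1)) is minimal, i.e. every point of 𝕋² × 𝕋 has dense forward orbit under H_c. -/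

import Mathlib

open MeasureTheory Filter Topology

open Set

theorem exists_minimal_invariant {Y : Type*} [TopologicalSpace Y] [T2Space Y]
    (F : Y → Y) {K₀ : Set Y} (hne : K₀.Nonempty) (hcpt : IsCompact K₀)
    (hinv : Set.MapsTo F K₀ K₀) :
    ∃ M ⊆ K₀, M.Nonempty ∧ IsCompact M ∧ Set.MapsTo F M M ∧
      ∀ K ⊆ M, K.Nonempty → IsCompact K → Set.MapsTo F K K → K = M := by
  set S : Set (Set Y) := {K | K.Nonempty ∧ IsCompact K ∧ Set.MapsTo F K K ∧ K ⊆ K₀} with hS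
  have hzorn : ∀ c ⊆ S, IsChain (· ⊆ ·) c → c.Nonempty → ∃ lb ∈ S, ∀ s ∈ c, lb ⊆ s := by
    rintro c hcS hchain ⟨K₁, hK₁⟩
    have hKcl : ∀ K ∈ c, IsClosed K := fun K hK => ((hcS hK).2.1).isClosed
    refine ⟨⋂₀ c, ⟨?_, ?_, ?_, ?_⟩, fun s hs => sInter_subset_of_mem hs⟩
    · haveI : Nonempty ↑c := ⟨⟨K₁, hK₁⟩⟩
      have hdir : DirectedOn (· ⊇ ·) c := by
        intro a ha b hb
        rcases hchain.total ha hb with h | h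
        · exact ⟨a, ha, le_refl _, h⟩
        · exact ⟨b, hb, h, le_refl _⟩
      exact IsCompact.nonempty_sInter_of_directed_nonempty_isCompact_isClosed
        hdir (fun K hK => (hcS hK).1) (fun K hK => (hcS hK).2.1) hKcl
    · exact IsCompact.of_isClosed_subset (hcS hK₁).2.1
        (isClosed_sInter hKcl) (sInter_subset_of_mem hK₁)
    · intro x hx
      rw [Set.mem_sInter] at hx ⊢
      exact fun K hK => (hcS hK).2.2.1 (hx K hK)
    · exact (sInter_subset_of_mem hK₁).trans (hcS hK₁).2.2.2
  obtain ⟨M, hMK₀, hmin⟩ := zorn_superset_nonempty S hzorn K₀ ⟨hne, hcpt, hinv, subset_rfl⟩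
  obtain ⟨hMne, hMcpt, hMinv, hMK⟩ := hmin.prop
  refine ⟨M, hMK₀, hMne, hMcpt, hMinv, ?_⟩
  intro K hKM hKne hKcpt hKinv
  exact subset_antisymm hKM (hmin.2 ⟨hKne, hKcpt, hKinv, hKM.trans hMK⟩ hKM)

theorem continuous_of_compact_graph {X T : Type*} [TopologicalSpace X] [T2Space X]
    [TopologicalSpace T] {f : X → T} {G : Set (X × T)} (hG : IsCompact G)
    (hGf : ∀ p ∈ G, p.2 = f p.1) (hfG : ∀ x, (x, f x) ∈ G) : Continuous f := by
  rw [continuous_iff_continuousAt]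
  intro x
  rw [ContinuousAt, tendsto_iff_ultrafilter]
  intro u hu
  set h : X → X × T := fun x' => (x', f x') with hh
  have hwG : G ∈ u.map h := by
    have : h ⁻¹' G = univ := eq_univ_of_forall fun x' => hfG x'
    rw [Ultrafilter.mem_map, this]
    exact univ_mem
  obtain ⟨p, hpG, hwp⟩ := (isCompact_iff_ultrafilter_le_nhds'.1 hG) (u.map h) hwG
  have hfst : Tendsto Prod.fst (↑(u.map h) : Filter (X × T)) (𝓝 p.1) := (continuousAt_fst).mono_left hwp
  have hfst' : Tendsto Prod.fst (↑(u.map h) : Filter (X × T)) (𝓝 x) := by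
    have : Tendsto (Prod.fst ∘ h) ↑u (𝓝 x) := by
      exact tendsto_id'.2 hu
    simpa [Filter.tendsto_map'_iff] using this
  have hx : p.1 = x := tendsto_nhds_unique hfst hfst'
  have hsnd : Tendsto Prod.snd (↑(u.map h) : Filter (X × T)) (𝓝 p.2) := (continuousAt_snd).mono_left hwp
  have : Tendsto (Prod.snd ∘ h) ↑u (𝓝 p.2) := by
    simpa [Filter.tendsto_map'_iff] using hsnd
  have hp2 : p.2 = f x := by rw [hGf p hpG, hx]
  simpa [hh, Function.comp_def, hp2] using this

theorem countable_of_one_separated {ι E : Type*} [MetricSpace E]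
    [TopologicalSpace.SeparableSpace E] (f : ι → E)
    (h : ∀ i j, i ≠ j → 1 ≤ dist (f i) (f j)) : Countable ι := by
  obtain ⟨D, hDc, hDd⟩ := TopologicalSpace.exists_countable_dense E
  have hpick : ∀ i : ι, ∃ d : E, d ∈ D ∧ dist (f i) d < 1/2 := by
    intro i
    obtain ⟨d, hd⟩ := (Metric.dense_iff.1 hDd) (f i) (1/2) (by norm_num)
    exact ⟨d, hd.2, by have := hd.1; rwa [Metric.mem_ball, dist_comm] at this⟩
  choose d hdD hdist using hpick
  haveI : Countable ↥D := hDc.to_subtype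
  have hinj : Function.Injective (fun i => (⟨d i, hdD i⟩ : ↥D)) := by
    intro i j hij
    by_contra hne
    have h1 : (1:ℝ) ≤ dist (f i) (f j) := h i j hne
    have h2 : dist (f i) (f j) ≤ dist (f i) (d i) + dist (d j) (f j) := by
      have : d i = d j := congrArg Subtype.val hij
      calc dist (f i) (f j) ≤ dist (f i) (d i) + dist (d i) (f j) := dist_triangle _ _ _
        _ = dist (f i) (d i) + dist (d j) (f j) := by rw [this]
    have h3 := hdist i
    have h4 := hdist j
    rw [dist_comm (d j) (f j)] at h2
    linarith
  exact Function.Injective.countable hinj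

theorem coboundary_of_not_minimal
    (g : (AddCircle (1:ℝ) × AddCircle (1:ℝ)) ≃ₜ (AddCircle (1:ℝ) × AddCircle (1:ℝ)))
    (hgmin : ∀ z : AddCircle (1:ℝ) × AddCircle (1:ℝ),
      Dense (Set.range fun n : ℕ => (⇑g)^[n] z))
    (φ : AddCircle (1:ℝ) × AddCircle (1:ℝ) → ℝ) (hφ : Continuous φ) (c : ℝ)
    (z₀ : (AddCircle (1:ℝ) × AddCircle (1:ℝ)) × AddCircle (1:ℝ))
    (hz₀ : ¬ Dense (Set.range fun n : ℕ =>
        (fun q : (AddCircle (1:ℝ) × AddCircle (1:ℝ)) × AddCircle (1:ℝ) =>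
          (g q.1, ((φ q.1 + c : ℝ) : AddCircle (1:ℝ)) + q.2))^[n] z₀)) :
    ∃ (k : ℕ) (v : AddCircle (1:ℝ) × AddCircle (1:ℝ) → AddCircle (1:ℝ)), k ≠ 0 ∧
      Continuous v ∧
      ∀ y, v (g y) = (((k : ℝ) * (φ y + c) : ℝ) : AddCircle (1:ℝ)) + v y := by
  classical
  set H : ((AddCircle (1:ℝ) × AddCircle (1:ℝ)) × AddCircle (1:ℝ)) →
      ((AddCircle (1:ℝ) × AddCircle (1:ℝ)) × AddCircle (1:ℝ)) :=
    fun q => (g q.1, ((φ q.1 + c : ℝ) : AddCircle (1:ℝ)) + q.2) with hH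
  have hHcont : Continuous H := by
    refine Continuous.prodMk (g.continuous.comp continuous_fst) ?_
    refine Continuous.add (f := fun q : ((AddCircle (1:ℝ) × AddCircle (1:ℝ)) × AddCircle (1:ℝ)) =>
      ((φ q.1 + c : ℝ) : AddCircle (1:ℝ))) ?_ continuous_snd
    have h1 : Continuous fun q : ((AddCircle (1:ℝ) × AddCircle (1:ℝ)) × AddCircle (1:ℝ)) =>
      (φ q.1 + c : ℝ) := hφ.fst'.add continuous_const
    exact (AddCircle.continuous_mk' 1).comp h1
  -- the orbit closure of `z₀`
  set K₀ := closure (Set.range fun n : ℕ => H^[n] z₀) with hK₀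
  have hK₀ne : K₀.Nonempty := ⟨z₀, subset_closure ⟨0, rfl⟩⟩
  have hK₀cpt : IsCompact K₀ := isClosed_closure.isCompact
  have hK₀inv : Set.MapsTo H K₀ K₀ := by
    intro q hq
    have h1 : H '' K₀ ⊆ closure (H '' Set.range fun n : ℕ => H^[n] z₀) :=
      image_closure_subset_closure_image hHcont
    have h2 : (H '' Set.range fun n : ℕ => H^[n] z₀) ⊆ Set.range fun n : ℕ => H^[n] z₀ := by
      rintro _ ⟨_, ⟨n, rfl⟩, rfl⟩
      exact ⟨n + 1, Function.iterate_succ_apply' H n z₀⟩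
    exact closure_mono h2 (h1 ⟨q, hq, rfl⟩)
  obtain ⟨M, hMK₀, hMne, hMcpt, hMinv, hMmin⟩ :=
    exists_minimal_invariant H hK₀ne hK₀cpt hK₀inv
  obtain ⟨m₀, hm₀⟩ := hMne
  -- vertical translations
  set τ : AddCircle (1:ℝ) → ((AddCircle (1:ℝ) × AddCircle (1:ℝ)) × AddCircle (1:ℝ)) →
      ((AddCircle (1:ℝ) × AddCircle (1:ℝ)) × AddCircle (1:ℝ)) :=
    fun s q => (q.1, q.2 + s) with hτ
  have hτcont : ∀ s, Continuous (τ s) := fun s =>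
    continuous_fst.prodMk (continuous_snd.add continuous_const)
  have hcomm : ∀ s q, H (τ s q) = τ s (H q) := by
    intro s q
    simp only [hτ, hH]
    exact Prod.ext rfl (add_assoc _ _ _).symm
  have hττ : ∀ s s' q, τ s (τ s' q) = τ (s' + s) q := by
    intro s s' q
    simp only [hτ]
    exact Prod.ext rfl (add_assoc _ _ _)
  have hτinvmem : ∀ s, Set.MapsTo H (τ s '' M) (τ s '' M) := by
    rintro s _ ⟨m, hm, rfl⟩
    rw [hcomm]
    exact ⟨H m, hMinv hm, rfl⟩
  -- key: a translate meeting M equals M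
  have key : ∀ s, ((τ s '' M) ∩ M).Nonempty → τ s '' M = M := by
    intro s hne2
    have hNcpt : IsCompact ((τ s '' M) ∩ M) :=
      (hMcpt.image (hτcont s)).inter_right hMcpt.isClosed
    have hNinv : Set.MapsTo H ((τ s '' M) ∩ M) ((τ s '' M) ∩ M) := by
      intro q hq
      exact ⟨hτinvmem s hq.1, hMinv hq.2⟩
    have hNM : (τ s '' M) ∩ M = M :=
      hMmin _ inter_subset_right hne2 hNcpt hNinv
    have hsub : M ⊆ τ s '' M := by
      conv_lhs => rw [← hNM]
      exact inter_subset_left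
    have hsub2 : τ (-s) '' M ⊆ M := by
      rintro _ ⟨m, hm, rfl⟩
      obtain ⟨m', hm', hmm⟩ := hsub hm
      have : τ (-s) m = m' := by
        rw [← hmm, hττ, add_neg_cancel]
        simp [hτ]
      rw [this]; exact hm'
    have hτM : τ (-s) '' M = M :=
      hMmin _ hsub2 ⟨τ (-s) m₀, ⟨m₀, hm₀, rfl⟩⟩ ((hMcpt.image (hτcont _)))
        (hτinvmem (-s))
    calc τ s '' M = τ s '' (τ (-s) '' M) := by rw [hτM]
      _ = M := by
          rw [image_image]
          have : ∀ q, τ s (τ (-s) q) = q := by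
            intro q; rw [hττ, neg_add_cancel]; simp [hτ]
          simp only [this, image_id']
  -- the set of vertical translations preserving M
  set A : Set (AddCircle (1:ℝ)) := {s | ∀ m ∈ M, τ s m ∈ M} with hA
  have hAeq : ∀ s ∈ A, τ s '' M = M := by
    intro s hs
    exact key s ⟨τ s m₀, ⟨m₀, hm₀, rfl⟩, hs m₀ hm₀⟩
  have hA0 : (0 : AddCircle (1:ℝ)) ∈ A := by
    intro m hm
    have : τ 0 m = m := by simp [hτ]
    rwa [this]
  have hAadd : ∀ s s', s ∈ A → s' ∈ A → s + s' ∈ A := by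
    intro s s' hs hs' m hm
    have : τ (s + s') m = τ s' (τ s m) := by rw [hττ]
    rw [this]
    exact hs' _ (hs m hm)
  have hAneg : ∀ s, s ∈ A → -s ∈ A := by
    intro s hs m hm
    have hmem : m ∈ τ s '' M := by rw [hAeq s hs]; exact hm
    obtain ⟨m', hm', rfl⟩ := hmem
    have : τ (-s) (τ s m') = m' := by rw [hττ, add_neg_cancel]; simp [hτ]
    rwa [this]
  have hAclosed : IsClosed A := by
    have : A = ⋂ m ∈ M, (fun s => τ s m) ⁻¹' M := by
      ext s
      simp only [hA, mem_setOf_eq, mem_iInter, mem_preimage]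
    rw [this]
    refine isClosed_biInter fun m _ => IsClosed.preimage ?_ hMcpt.isClosed
    exact continuous_const.prodMk (continuous_const.add continuous_id)
  -- every fiber of M over the base is nonempty
  have hfiber : ∀ y : AddCircle (1:ℝ) × AddCircle (1:ℝ), ∃ t, (y, t) ∈ M := by
    have horb : ∀ n : ℕ, ∃ t, ((⇑g)^[n] m₀.1, t) ∈ M := by
      intro n
      induction n with
      | zero => exact ⟨m₀.2, by simpa using hm₀⟩
      | succ n ih =>
        obtain ⟨t, ht⟩ := ih
        refine ⟨((φ ((⇑g)^[n] m₀.1) + c : ℝ) : AddCircle (1:ℝ)) + t, ?_⟩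
        have := hMinv ht
        rwa [Function.iterate_succ_apply']
    have hfst : Prod.fst '' M = univ := by
      refine subset_antisymm (subset_univ _) ?_
      have hclosed : IsClosed (Prod.fst '' M) := (hMcpt.image continuous_fst).isClosed
      have hsub : (Set.range fun n : ℕ => (⇑g)^[n] m₀.1) ⊆ Prod.fst '' M := by
        rintro _ ⟨n, rfl⟩
        obtain ⟨t, ht⟩ := horb n
        exact ⟨_, ht, rfl⟩
      calc univ = closure (Set.range fun n : ℕ => (⇑g)^[n] m₀.1) :=
            ((hgmin m₀.1).closure_eq).symm
        _ ⊆ closure (Prod.fst '' M) := closure_mono hsub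
        _ = Prod.fst '' M := hclosed.closure_eq
    intro y
    have : y ∈ Prod.fst '' M := by rw [hfst]; trivial
    obtain ⟨p, hp, hpy⟩ := this
    exact ⟨p.2, by rw [← hpy]; simpa using hp⟩
  -- the subgroup of ℝ corresponding to A
  set Γ : AddSubgroup ℝ :=
    { carrier := ((↑) : ℝ → AddCircle (1:ℝ)) ⁻¹' A
      zero_mem' := by
        have : ((0:ℝ) : AddCircle (1:ℝ)) = 0 := rfl
        simpa [this] using hA0
      add_mem' := by
        intro a b ha hb
        have : ((a + b : ℝ) : AddCircle (1:ℝ)) = (a : AddCircle (1:ℝ)) + b := rfl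
        simpa [Set.mem_preimage, this] using hAadd _ _ ha hb
      neg_mem' := by
        intro a ha
        have : ((-a : ℝ) : AddCircle (1:ℝ)) = -(a : AddCircle (1:ℝ)) := rfl
        simpa [Set.mem_preimage, this] using hAneg _ ha } with hΓ
  rcases AddSubgroup.dense_or_cyclic Γ with hdense | ⟨a, ha⟩
  · -- dense case: M is everything, contradicting non-density of the orbit
    exfalso
    have hAuniv : A = univ := by
      refine subset_antisymm (subset_univ _) ?_
      have h1 : ((↑) : ℝ → AddCircle (1:ℝ)) '' (Γ : Set ℝ) ⊆ A := by
        rintro _ ⟨x, hx, rfl⟩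
        exact hx
      have h2 : (univ : Set (AddCircle (1:ℝ))) ⊆
          closure (((↑) : ℝ → AddCircle (1:ℝ)) '' (Γ : Set ℝ)) := by
        intro x _
        obtain ⟨r, rfl⟩ := QuotientAddGroup.mk_surjective x
        have hcl : ((↑) : ℝ → AddCircle (1:ℝ)) '' closure (Γ : Set ℝ) ⊆
            closure (((↑) : ℝ → AddCircle (1:ℝ)) '' (Γ : Set ℝ)) :=
          image_closure_subset_closure_image (AddCircle.continuous_mk' 1)
        exact hcl ⟨r, by rw [hdense.closure_eq]; trivial, rfl⟩
      calc (univ : Set (AddCircle (1:ℝ)))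
          ⊆ closure (((↑) : ℝ → AddCircle (1:ℝ)) '' (Γ : Set ℝ)) := h2
        _ ⊆ closure A := closure_mono h1
        _ = A := hAclosed.closure_eq
    have hMuniv : M = univ := by
      refine subset_antisymm (subset_univ _) ?_
      intro q _
      obtain ⟨t₀, ht₀⟩ := hfiber q.1
      have hs : (q.2 - t₀) ∈ A := by rw [hAuniv]; trivial
      have := hs (q.1, t₀) ht₀
      have heq : τ (q.2 - t₀) (q.1, t₀) = q := by
        simp only [hτ]
        rw [add_comm, sub_add_cancel]
      rwa [heq] at this
    apply hz₀
    rw [dense_iff_closure_eq]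
    refine subset_antisymm (subset_univ _) ?_
    calc (univ : Set ((AddCircle (1:ℝ) × AddCircle (1:ℝ)) × AddCircle (1:ℝ)))
        = M := hMuniv.symm
      _ ⊆ K₀ := hMK₀
  · -- cyclic case: A is killed by some k ≠ 0
    have hΓz : Γ = AddSubgroup.zmultiples a := by
      rw [ha, AddSubgroup.zmultiples_eq_closure]
    have h1Γ : (1:ℝ) ∈ Γ := by
      show ((1:ℝ) : AddCircle (1:ℝ)) ∈ A
      rw [AddCircle.coe_period]
      exact hA0
    rw [hΓz] at h1Γ
    obtain ⟨m, hm⟩ := AddSubgroup.mem_zmultiples_iff.1 h1Γ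
    have hm0 : m ≠ 0 := by
      rintro rfl
      simp at hm
    set k : ℕ := m.natAbs with hk
    have hkne : k ≠ 0 := Int.natAbs_ne_zero.2 hm0
    have hktor : ∀ s ∈ A, k • s = 0 := by
      intro s hs
      obtain ⟨x, rfl⟩ := QuotientAddGroup.mk_surjective s
      have hx : x ∈ Γ := hs
      rw [hΓz] at hx
      obtain ⟨j, rfl⟩ := AddSubgroup.mem_zmultiples_iff.1 hx
      have hmx : m • (j • a) = (j : ℝ) := by
        rw [smul_smul, mul_comm, ← smul_smul, hm]
        simp
      have hz : m • ((j • a : ℝ) : AddCircle (1:ℝ)) = 0 := by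
        rw [← AddCircle.coe_zsmul, hmx, AddCircle.coe_eq_zero_iff]
        exact ⟨j, by simp⟩
      rcases Int.natAbs_eq m with hmeq | hmeq
      · rw [← natCast_zsmul, ← hmeq]
        exact hz
      · rw [← natCast_zsmul]
        have : ((k : ℤ)) • ((j • a : ℝ) : AddCircle (1:ℝ)) =
            -(m • ((j • a : ℝ) : AddCircle (1:ℝ))) := by
          rw [← neg_zsmul]
          congr 1
          omega
        rw [this, hz, neg_zero]
    -- fibers of M are A-cosets
    have hfibA : ∀ (y : AddCircle (1:ℝ) × AddCircle (1:ℝ)) t t',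
        (y, t) ∈ M → (y, t') ∈ M → t' - t ∈ A := by
      intro y t t' ht ht'
      have hmem : ((y, t') : (AddCircle (1:ℝ) × AddCircle (1:ℝ)) × AddCircle (1:ℝ))
          ∈ τ (t' - t) '' M := by
        refine ⟨(y, t), ht, ?_⟩
        simp only [hτ]
        rw [add_comm, sub_add_cancel]
      have hKeq := key (t' - t) ⟨(y, t'), hmem, ht'⟩
      intro p hp
      rw [← hKeq]
      exact ⟨p, hp, rfl⟩
    -- the function v
    set v : (AddCircle (1:ℝ) × AddCircle (1:ℝ)) → AddCircle (1:ℝ) :=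
      fun y => k • (Classical.choose (hfiber y)) with hv
    have hvdef : ∀ y, (y, Classical.choose (hfiber y)) ∈ M :=
      fun y => Classical.choose_spec (hfiber y)
    have hvspec : ∀ y t, (y, t) ∈ M → v y = k • t := by
      intro y t ht
      have hAmem := hfibA y (Classical.choose (hfiber y)) t (hvdef y) ht
      have h0 : k • (t - Classical.choose (hfiber y)) = 0 := hktor _ hAmem
      rw [smul_sub, sub_eq_zero] at h0
      rw [hv]
      exact h0.symm
    -- continuity of v via its compact graph
    have hvcont : Continuous v := by
      have hGcpt : IsCompact ((fun q : (AddCircle (1:ℝ) × AddCircle (1:ℝ)) × AddCircle (1:ℝ)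
          => (q.1, k • q.2)) '' M) := by
        refine hMcpt.image ?_
        exact continuous_fst.prodMk ((continuous_const_smul k).comp continuous_snd)
      refine continuous_of_compact_graph hGcpt ?_ ?_
      · rintro p ⟨q, hq, rfl⟩
        exact (hvspec q.1 q.2 (by simpa using hq)).symm
      · intro y
        exact ⟨(y, Classical.choose (hfiber y)), hvdef y, rfl⟩
    refine ⟨k, v, hkne, hvcont, ?_⟩
    intro y
    have ht₀ := hvdef y
    have hHmem := hMinv ht₀
    have hHy : H (y, Classical.choose (hfiber y)) =
        (g y, ((φ y + c : ℝ) : AddCircle (1:ℝ)) + Classical.choose (hfiber y)) := rfl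
    rw [hHy] at hHmem
    have := hvspec (g y) _ hHmem
    rw [this, smul_add]
    congr 1
    rw [← AddCircle.coe_nsmul, nsmul_eq_mul]

/-- For a minimal homeomorphism `g` of `𝕋²` admitting two ergodic
absolutely continuous invariant probability measures `μ₋, μ₊`, and a continuous
`φ : 𝕋² → ℝ` with `∫ φ dμ₋ < 0 < ∫ φ dμ₊`, there is `c ∈ (0,1)` such that
`H_c(x,t) = (g x, φ(x) + c + t mod 1)` is minimal on `𝕋² × 𝕋`. -/
theorem exists_c_skew_product_minimal
    (g : (AddCircle (1:ℝ) × AddCircle (1:ℝ)) ≃ₜ (AddCircle (1:ℝ) × AddCircle (1:ℝ)))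
    (hgmin : ∀ z : AddCircle (1:ℝ) × AddCircle (1:ℝ),
      Dense (Set.range fun n : ℕ => (⇑g)^[n] z))
    (μm μp : Measure (AddCircle (1:ℝ) × AddCircle (1:ℝ)))
    [IsProbabilityMeasure μm] [IsProbabilityMeasure μp]
    (hem : Ergodic (⇑g) μm) (hep : Ergodic (⇑g) μp)
    (hacm : μm ≪ (volume : Measure (AddCircle (1:ℝ) × AddCircle (1:ℝ))))
    (hacp : μp ≪ (volume : Measure (AddCircle (1:ℝ) × AddCircle (1:ℝ))))
    (φ : AddCircle (1:ℝ) × AddCircle (1:ℝ) → ℝ) (hφ : Continuous φ)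
    (hneg : ∫ z, φ z ∂μm < 0) (hpos : 0 < ∫ z, φ z ∂μp) :
    ∃ c ∈ Set.Ioo (0:ℝ) 1,
      ∀ z : (AddCircle (1:ℝ) × AddCircle (1:ℝ)) × AddCircle (1:ℝ),
        Dense (Set.range fun n : ℕ =>
          (fun q : (AddCircle (1:ℝ) × AddCircle (1:ℝ)) × AddCircle (1:ℝ) =>
            (g q.1, ((φ q.1 + c : ℝ) : AddCircle (1:ℝ)) + q.2))^[n] z) := by
  
  classical
  by_contra hcon
  push_neg at hcon
  have hP : ∀ c : ℝ, c ∈ Set.Ioo (0:ℝ) 1 →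
      ∃ (k : ℕ) (v : AddCircle (1:ℝ) × AddCircle (1:ℝ) → AddCircle (1:ℝ)), k ≠ 0 ∧
        Continuous v ∧
        ∀ y, v (g y) = (((k : ℝ) * (φ y + c) : ℝ) : AddCircle (1:ℝ)) + v y := by
    intro c hc
    obtain ⟨z, hz⟩ := hcon c hc
    exact coboundary_of_not_minimal g hgmin φ hφ c z hz
  choose K V hK hVc hVe using hP
  have hIoo : ¬ (Set.Ioo (0:ℝ) 1).Countable := by
    intro hcnt
    have h0 := hcnt.measure_zero (volume : Measure ℝ)
    rw [Real.volume_Ioo] at h0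
    norm_num at h0
  set S : ℕ → Set ℝ := fun k => {c | ∃ h : c ∈ Set.Ioo (0:ℝ) 1, K c h = k} with hS
  have hcover : Set.Ioo (0:ℝ) 1 ⊆ ⋃ k, S k := fun c hc => Set.mem_iUnion.2 ⟨K c hc, hc, rfl⟩
  obtain ⟨k₀, hk₀⟩ : ∃ k, ¬ (S k).Countable := by
    by_contra hall
    push_neg at hall
    exact hIoo ((Set.countable_iUnion hall).mono hcover)
  have hk₀ne : k₀ ≠ 0 := by
    have hne : (S k₀).Nonempty := by
      by_contra hempty
      rw [Set.not_nonempty_iff_eq_empty] at hempty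
      exact hk₀ (hempty ▸ Set.countable_empty)
    obtain ⟨c, hcmem, hcK⟩ := hne
    rw [← hcK]
    exact hK c hcmem
  set q : ℝ → AddCircle (1:ℝ) := fun c => ((k₀ * c : ℝ) : AddCircle (1:ℝ)) with hq
  have hT : ¬ (q '' S k₀).Countable := by
    intro hTc
    apply hk₀
    have hSsub : S k₀ ⊆ ⋃ t ∈ q '' S k₀, {c | c ∈ S k₀ ∧ q c = t} :=
      fun c hc => Set.mem_biUnion ⟨c, hc, rfl⟩ ⟨hc, rfl⟩
    refine (Set.Countable.biUnion hTc ?_).mono hSsub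
    intro t ht
    obtain ⟨c₁, hc₁S, hc₁⟩ := ht
    have hk₀R : (k₀:ℝ) ≠ 0 := Nat.cast_ne_zero.2 hk₀ne
    have hfib : {c | c ∈ S k₀ ∧ q c = t} ⊆ Set.range (fun j : ℤ => c₁ + j / k₀) := by
      rintro c ⟨hcS, hct⟩
      have hqq : q c₁ = q c := by rw [hct, hc₁]
      rw [hq] at hqq
      have hz := (QuotientAddGroup.eq).1 hqq
      obtain ⟨j, hj⟩ := hz
      refine ⟨j, ?_⟩
      have hj' : (j : ℝ) = -(k₀ * c₁) + k₀ * c := by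
        rw [← hj]; simp
      field_simp
      linarith [hj']
    exact (Set.countable_range _).mono hfib
  -- attach to each class a continuous circle-valued eigenfunction
  have hWex : ∀ t : ↥(q '' S k₀), ∃ (w : C(AddCircle (1:ℝ) × AddCircle (1:ℝ), ℂ))
      (c : ℝ) (hc : c ∈ Set.Ioo (0:ℝ) 1), K c hc = k₀ ∧ q c = ↑t ∧
      ∀ y, w y = (AddCircle.toCircle (V c hc y) : ℂ) := by
    rintro ⟨t, ht⟩
    obtain ⟨c, hcS, hct⟩ := ht
    obtain ⟨hc, hKc⟩ := hcS
    refine ⟨⟨fun y => (AddCircle.toCircle (V c hc y) : ℂ), ?_⟩, c, hc, hKc, hct, fun y => rfl⟩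
    exact continuous_subtype_val.comp (AddCircle.continuous_toCircle.comp (hVc c hc))
  choose W cc hcmem hKcc hqcc hWeq using hWex
  -- orthogonality of distinct eigenfunctions
  have horth : ∀ (c c' : ℝ) (hc : c ∈ Set.Ioo (0:ℝ) 1) (hc' : c' ∈ Set.Ioo (0:ℝ) 1),
      K c hc = k₀ → K c' hc' = k₀ → q c ≠ q c' →
      ∫ y, (AddCircle.toCircle (V c hc y) : ℂ) *
        (starRingEnd ℂ) (AddCircle.toCircle (V c' hc' y) : ℂ) ∂μm = 0 := by
    intro c c' hc hc' hKc hKc' hqq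
    set v := V c hc with hvv
    set v' := V c' hc' with hvv'
    set f : (AddCircle (1:ℝ) × AddCircle (1:ℝ)) → ℂ := fun y =>
      (AddCircle.toCircle (v y) : ℂ) * (starRingEnd ℂ) (AddCircle.toCircle (v' y) : ℂ) with hf
    have hfcont : Continuous f := by
      apply Continuous.mul
      · exact continuous_subtype_val.comp (AddCircle.continuous_toCircle.comp (hVc c hc))
      · exact Complex.continuous_conj.comp
          (continuous_subtype_val.comp (AddCircle.continuous_toCircle.comp (hVc c' hc')))
    set lam : ℂ := (AddCircle.toCircle ((k₀ * (c - c') : ℝ) : AddCircle (1:ℝ)) : ℂ) with hlam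
    have hsubc : ∀ a b : AddCircle (1:ℝ),
        AddCircle.toCircle (a - b) = AddCircle.toCircle a * (AddCircle.toCircle b)⁻¹ := by
      intro a b
      rw [eq_mul_inv_iff_mul_eq, ← AddCircle.toCircle_add, sub_add_cancel]
    have hcoc : ∀ y, f (g y) = lam * f y := by
      intro y
      have h1 := hVe c hc y
      have h2 := hVe c' hc' y
      rw [hKc] at h1
      rw [hKc'] at h2
      rw [← hvv] at h1
      rw [← hvv'] at h2
      have hAA : (AddCircle.toCircle (((k₀ : ℝ) * (φ y + c) : ℝ) : AddCircle (1:ℝ)) : ℂ) *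
          (starRingEnd ℂ)
            (AddCircle.toCircle (((k₀ : ℝ) * (φ y + c') : ℝ) : AddCircle (1:ℝ)) : ℂ) = lam := by
        rw [← Circle.coe_inv_eq_conj, ← Circle.coe_mul, hlam]
        congr 1
        rw [← hsubc]
        congr 1
        have hring : ((k₀ : ℝ) * (c - c') : ℝ) =
            ((k₀ : ℝ) * (φ y + c) : ℝ) - ((k₀ : ℝ) * (φ y + c') : ℝ) := by ring
        rw [hring]
        rfl
      calc f (g y) = (AddCircle.toCircle (v (g y)) : ℂ) *
            (starRingEnd ℂ) (AddCircle.toCircle (v' (g y)) : ℂ) := rfl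
        _ = ((AddCircle.toCircle (((k₀ : ℝ) * (φ y + c) : ℝ) : AddCircle (1:ℝ)) : ℂ) *
              (AddCircle.toCircle (v y) : ℂ)) *
            ((starRingEnd ℂ)
              (AddCircle.toCircle (((k₀ : ℝ) * (φ y + c') : ℝ) : AddCircle (1:ℝ)) : ℂ) *
             (starRingEnd ℂ) (AddCircle.toCircle (v' y) : ℂ)) := by
            rw [h1, h2, AddCircle.toCircle_add, AddCircle.toCircle_add,
              Circle.coe_mul, Circle.coe_mul, map_mul]
        _ = lam * f y := by rw [← hAA, hf]; ring
    have hfint : Integrable f μm :=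
      hfcont.integrable_of_hasCompactSupport (HasCompactSupport.of_compactSpace f)
    have hmp : MeasurePreserving (⇑(g.toMeasurableEquiv)) μm μm := by
      rw [Homeomorph.toMeasurableEquiv_coe]
      exact hem.toMeasurePreserving
    have hint1 := hmp.integral_comp' f
    simp only [Homeomorph.toMeasurableEquiv_coe] at hint1
    have hint3 : ∫ y, f (g y) ∂μm = lam * ∫ y, f y ∂μm := by
      calc ∫ y, f (g y) ∂μm = ∫ y, lam * f y ∂μm := by simp only [hcoc]
        _ = lam * ∫ y, f y ∂μm := by rw [integral_const_mul]
    rw [hint3] at hint1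
    have h5 : (1 - lam) * ∫ y, f y ∂μm = 0 := by linear_combination -hint1
    have hlam1 : lam ≠ 1 := by
      intro hfalse
      apply hqq
      have hxc : ((k₀ * (c - c') : ℝ) : AddCircle (1:ℝ)) = 0 := by
        apply AddCircle.injective_toCircle (one_ne_zero)
        rw [AddCircle.toCircle_zero]
        apply Subtype.coe_injective
        rw [hlam] at hfalse
        simpa using hfalse
      have hsub : q c - q c' = 0 := by
        have he : q c - q c' = ((k₀ * (c - c') : ℝ) : AddCircle (1:ℝ)) := by
          rw [hq]
          have : ((k₀ : ℝ) * (c - c') : ℝ) = (k₀ * c : ℝ) - (k₀ * c' : ℝ) := by ring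
          rw [this]
          rfl
        rw [he, hxc]
      exact (sub_eq_zero.1 hsub)
    rcases mul_eq_zero.1 h5 with h | h
    · exact absurd (by linear_combination -h : lam = 1) hlam1
    · exact h
  have hself : ∀ (c : ℝ) (hc : c ∈ Set.Ioo (0:ℝ) 1),
      ∫ y, (AddCircle.toCircle (V c hc y) : ℂ) *
        (starRingEnd ℂ) (AddCircle.toCircle (V c hc y) : ℂ) ∂μm = 1 := by
    intro c hc
    have hone : ∀ y, (AddCircle.toCircle (V c hc y) : ℂ) *
        (starRingEnd ℂ) (AddCircle.toCircle (V c hc y) : ℂ) = 1 := by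
      intro y
      rw [Complex.mul_conj]
      rw [Complex.normSq_eq_norm_sq, Circle.norm_coe]
      norm_num
    simp only [hone]
    simp [measure_univ]
  -- distinct classes give 1-separated continuous functions
  have hsep : ∀ t t' : ↥(q '' S k₀), t ≠ t' → 1 ≤ dist (W t) (W t') := by
    intro t t' htt
    have hne : q (cc t) ≠ q (cc t') := by
      rw [hqcc t, hqcc t']
      exact fun h => htt (Subtype.ext h)
    have h0 := horth (cc t) (cc t') (hcmem t) (hcmem t') (hKcc t) (hKcc t') hne
    have h1 := hself (cc t') (hcmem t')
    have hint1 : Integrable (fun y => (W t) y * (starRingEnd ℂ) ((W t') y)) μm := by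
      refine Continuous.integrable_of_hasCompactSupport ?_ (HasCompactSupport.of_compactSpace _)
      exact (W t).continuous.mul (Complex.continuous_conj.comp (W t').continuous)
    have hint2 : Integrable (fun y => (W t') y * (starRingEnd ℂ) ((W t') y)) μm := by
      refine Continuous.integrable_of_hasCompactSupport ?_ (HasCompactSupport.of_compactSpace _)
      exact (W t').continuous.mul (Complex.continuous_conj.comp (W t').continuous)
    have hD : ∫ y, ((W t) y - (W t') y) * (starRingEnd ℂ) ((W t') y) ∂μm = -1 := by
      have hexp : ∀ y, ((W t) y - (W t') y) * (starRingEnd ℂ) ((W t') y) =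
          (W t) y * (starRingEnd ℂ) ((W t') y) - (W t') y * (starRingEnd ℂ) ((W t') y) := by
        intro y; ring
      simp only [hexp]
      rw [integral_sub hint1 hint2]
      have e1 : ∫ y, (W t) y * (starRingEnd ℂ) ((W t') y) ∂μm = 0 := by
        simp only [hWeq]
        exact h0
      have e2 : ∫ y, (W t') y * (starRingEnd ℂ) ((W t') y) ∂μm = 1 := by
        simp only [hWeq]
        exact h1
      rw [e1, e2]
      norm_num
    have hbound : ‖∫ y, ((W t) y - (W t') y) * (starRingEnd ℂ) ((W t') y) ∂μm‖ ≤
        dist (W t) (W t') * (μm Set.univ).toReal := by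
      apply norm_integral_le_of_norm_le_const
      refine Filter.Eventually.of_forall fun y => ?_
      rw [norm_mul, RCLike.norm_conj]
      have hnorm1 : ‖((W t') y : ℂ)‖ = 1 := by
        rw [hWeq]
        rw [Circle.norm_coe]
      rw [hnorm1, mul_one, ← dist_eq_norm]
      exact ContinuousMap.dist_apply_le_dist y
    rw [hD] at hbound
    simp [measure_univ] at hbound
    exact hbound
  haveI := countable_of_one_separated W hsep
  exact hT (Set.countable_coe_iff.1 inferInstance)
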